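/- Let ι_1 : Fin n_1 → Fin m, …, ι_r : Fin n_r → Fin m be injective maps with pairwise disjoint ranges, let u_k ∈ M_{n_k}(ℂ) be unitary matrices (u_k·u_k* = u_k*·u_k = 1_{n_k}), and set v := Σ_{k=1}^r Φ_{ι_k}(u_k) + (1_m − Σ_{k=1}^r Φ_{ι_k}(1_{n_k})). Then for every k ∈ {1,…,r} and all a, E ∈ M_{n_k}(ℂ): v*·Φ_{ι_k}(a)·v − v*·(Φ_{ι_k}(E)·v − v·Φ_{ι_k}(E)) = Φ_{ι_k}(u_k*·a·u_k − u_k*·(E·u_k − u_k·E)). Consequently, if a connection 1-form η on M_m(ℂ) is φ-compatible with a connection 1-form ω = (ω_k) on Π_k M_{n_k}(ℂ) (meaning η evaluated on the derivation ad_{Φ_{ι_k}(E)} equals Φ_{ι_k}(ω_k evaluated on ad_E)), then the gauge-transformed 1-form η^v is φ-compatible with ω^{(u_1,…,u_r)}. -/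

import Mathlib

open Matrix

/-- The corner embedding `Φ_ι : M_n(ℂ) → M_m(ℂ)` associated to an injective map
`ι : Fin n → Fin m`: the `(ι k, ι l)` entry of `cornerEmb ι a` is `a k l` and all other
entries are `0`. -/
noncomputable def cornerEmb {n m : ℕ} (ι : Fin n → Fin m) (a : Matrix (Fin n) (Fin n) ℂ) :
    Matrix (Fin m) (Fin m) ℂ :=
  ∑ k : Fin n, ∑ l : Fin n, a k l • Matrix.single (ι k) (ι l) 1

noncomputable def embMat {n m : ℕ} (ι : Fin n → Fin m) : Matrix (Fin m) (Fin n) ℂ :=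
  Matrix.of fun i k => if ι k = i then 1 else 0

lemma cornerEmb_eq {n m : ℕ} (ι : Fin n → Fin m) (a : Matrix (Fin n) (Fin n) ℂ) :
    cornerEmb ι a = embMat ι * a * (embMat ι)ᵀ := by
  ext i j
  simp only [cornerEmb, embMat, Matrix.sum_apply, Matrix.mul_apply, Matrix.single,
    Matrix.smul_apply, Matrix.of_apply, Matrix.transpose_apply, smul_eq_mul, ite_and,
    mul_ite, ite_mul, one_mul, mul_one, mul_zero, zero_mul, Finset.sum_ite_eq',
    Finset.mem_univ, if_true]
  calc (∑ x : Fin n, ∑ y : Fin n, if ι x = i then if ι y = j then a x y else 0 else 0)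
      = ∑ y : Fin n, ∑ x : Fin n, if ι x = i then if ι y = j then a x y else 0 else 0 :=
        Finset.sum_comm
    _ = _ := by
        refine Finset.sum_congr rfl fun y _ => ?_
        by_cases h : ι y = j <;> simp [h]

lemma embMat_conjT {n m : ℕ} (ι : Fin n → Fin m) : (embMat ι)ᴴ = (embMat ι)ᵀ := by
  ext i j; simp [embMat, conjTranspose_apply]

lemma embMatT_conjT {n m : ℕ} (ι : Fin n → Fin m) : ((embMat ι)ᵀ)ᴴ = embMat ι := by
  ext i j
  simp [embMat, conjTranspose_apply]

lemma embMat_T_mul_self {n m : ℕ} (ι : Fin n → Fin m) (h : Function.Injective ι) :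
    (embMat ι)ᵀ * embMat ι = 1 := by
  ext k l
  simp [embMat, Matrix.mul_apply, Matrix.one_apply, ite_and]
  by_cases hkl : k = l
  · simp [hkl]
  · have : ι k ≠ ι l := fun hh => hkl (h hh)
    simp [hkl, this]

lemma embMat_T_mul_disj {n n' m : ℕ} (ι : Fin n → Fin m) (κ : Fin n' → Fin m)
    (h : Disjoint (Set.range ι) (Set.range κ)) : (embMat ι)ᵀ * embMat κ = 0 := by
  ext k l
  simp [embMat, Matrix.mul_apply, ite_and]
  intro hh
  exact Set.disjoint_left.mp h ⟨k, rfl⟩ ⟨l, hh.symm⟩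

lemma cornerEmb_mul {n m : ℕ} (ι : Fin n → Fin m) (h : Function.Injective ι)
    (a b : Matrix (Fin n) (Fin n) ℂ) :
    cornerEmb ι a * cornerEmb ι b = cornerEmb ι (a * b) := by
  simp only [cornerEmb_eq]
  calc embMat ι * a * (embMat ι)ᵀ * (embMat ι * b * (embMat ι)ᵀ)
      = embMat ι * a * ((embMat ι)ᵀ * embMat ι) * (b * (embMat ι)ᵀ) := by
        simp only [Matrix.mul_assoc]
    _ = _ := by rw [embMat_T_mul_self ι h]; simp [Matrix.mul_assoc]

lemma cornerEmb_mul_disj {n n' m : ℕ} (ι : Fin n → Fin m) (κ : Fin n' → Fin m)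
    (h : Disjoint (Set.range ι) (Set.range κ))
    (a : Matrix (Fin n) (Fin n) ℂ) (b : Matrix (Fin n') (Fin n') ℂ) :
    cornerEmb ι a * cornerEmb κ b = 0 := by
  simp only [cornerEmb_eq]
  calc embMat ι * a * (embMat ι)ᵀ * (embMat κ * b * (embMat κ)ᵀ)
      = embMat ι * a * ((embMat ι)ᵀ * embMat κ) * (b * (embMat κ)ᵀ) := by
        simp only [Matrix.mul_assoc]
    _ = 0 := by rw [embMat_T_mul_disj ι κ h]; simp

lemma cornerEmb_conjT {n m : ℕ} (ι : Fin n → Fin m) (a : Matrix (Fin n) (Fin n) ℂ) :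
    (cornerEmb ι a)ᴴ = cornerEmb ι aᴴ := by
  simp only [cornerEmb_eq, Matrix.conjTranspose_mul, embMat_conjT, embMatT_conjT,
    Matrix.mul_assoc]

lemma cornerEmb_sub {n m : ℕ} (ι : Fin n → Fin m) (a b : Matrix (Fin n) (Fin n) ℂ) :
    cornerEmb ι (a - b) = cornerEmb ι a - cornerEmb ι b := by
  simp [cornerEmb_eq, Matrix.sub_mul, Matrix.mul_sub]

/-- Gauge transformation by the lifted unitary `v = ṽ(u₁,…,u_r)` is
compatible with the corner embeddings: the gauge transform of an embedded quantity is
the embedding of the gauge transform.  Consequently, if a connection 1-form `η` on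
`M_m(ℂ)` is `φ`-compatible with `ω = (ω_k)`, then `η^v` is `φ`-compatible with
`ω^{(u₁,…,u_r)}`. -/
theorem gauge_transform_phi_compatible {r m : ℕ} {n : Fin r → ℕ}
    (ι : (k : Fin r) → Fin (n k) → Fin m)
    (hinj : ∀ k, Function.Injective (ι k))
    (hdisj : ∀ k l, k ≠ l → Disjoint (Set.range (ι k)) (Set.range (ι l)))
    (u : (k : Fin r) → Matrix (Fin (n k)) (Fin (n k)) ℂ)
    (hu : ∀ k, u k * (u k)ᴴ = 1 ∧ (u k)ᴴ * u k = 1)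
    (v : Matrix (Fin m) (Fin m) ℂ)
    (hv : v = (∑ k, cornerEmb (ι k) (u k)) +
        (1 - ∑ k, cornerEmb (ι k) (1 : Matrix (Fin (n k)) (Fin (n k)) ℂ))) :
    (∀ (k : Fin r) (a E : Matrix (Fin (n k)) (Fin (n k)) ℂ),
      vᴴ * cornerEmb (ι k) a * v -
          vᴴ * (cornerEmb (ι k) E * v - v * cornerEmb (ι k) E) =
        cornerEmb (ι k)
          ((u k)ᴴ * a * u k - (u k)ᴴ * (E * u k - u k * E))) ∧
    (∀ (η : Matrix (Fin m) (Fin m) ℂ →ₗ[ℂ] Matrix (Fin m) (Fin m) ℂ)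
       (ω : (k : Fin r) →
         (Matrix (Fin (n k)) (Fin (n k)) ℂ →ₗ[ℂ] Matrix (Fin (n k)) (Fin (n k)) ℂ)),
      (∀ (k : Fin r) (E : Matrix (Fin (n k)) (Fin (n k)) ℂ), E.trace = 0 →
        η (cornerEmb (ι k) E) = cornerEmb (ι k) (ω k E)) →
      ∀ (k : Fin r) (E : Matrix (Fin (n k)) (Fin (n k)) ℂ), E.trace = 0 →
        vᴴ * η (cornerEmb (ι k) E) * v -
            vᴴ * (cornerEmb (ι k) E * v - v * cornerEmb (ι k) E) =
          cornerEmb (ι k)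
            ((u k)ᴴ * ω k E * u k - (u k)ᴴ * (E * u k - u k * E))) := by
  have hvH : vᴴ = (∑ k, cornerEmb (ι k) ((u k)ᴴ)) +
      (1 - ∑ k, cornerEmb (ι k) (1 : Matrix (Fin (n k)) (Fin (n k)) ℂ)) := by
    rw [hv]
    simp [Matrix.conjTranspose_add, Matrix.conjTranspose_sub, Matrix.conjTranspose_one,
      Matrix.conjTranspose_sum, cornerEmb_conjT]
  have hR : ∀ (k : Fin r) (b : Matrix (Fin (n k)) (Fin (n k)) ℂ),
      cornerEmb (ι k) b * v = cornerEmb (ι k) (b * u k) := by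
    intro k b
    rw [hv, Matrix.mul_add, Matrix.mul_sub, Matrix.mul_one, Finset.mul_sum, Finset.mul_sum,
      Finset.sum_eq_single k (fun l _ hl =>
        cornerEmb_mul_disj (ι k) (ι l) (hdisj k l (Ne.symm hl)) b (u l))
        (by simp),
      Finset.sum_eq_single k (fun l _ hl =>
        cornerEmb_mul_disj (ι k) (ι l) (hdisj k l (Ne.symm hl)) b 1)
        (by simp),
      cornerEmb_mul (ι k) (hinj k), cornerEmb_mul (ι k) (hinj k), Matrix.mul_one]
    abel
  have hL : ∀ (k : Fin r) (b : Matrix (Fin (n k)) (Fin (n k)) ℂ),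
      v * cornerEmb (ι k) b = cornerEmb (ι k) (u k * b) := by
    intro k b
    rw [hv, Matrix.add_mul, Matrix.sub_mul, Matrix.one_mul, Finset.sum_mul, Finset.sum_mul,
      Finset.sum_eq_single k (fun l _ hl =>
        cornerEmb_mul_disj (ι l) (ι k) (hdisj l k hl) (u l) b)
        (by simp),
      Finset.sum_eq_single k (fun l _ hl =>
        cornerEmb_mul_disj (ι l) (ι k) (hdisj l k hl) 1 b)
        (by simp),
      cornerEmb_mul (ι k) (hinj k), cornerEmb_mul (ι k) (hinj k), Matrix.one_mul]
    abel
  have hLH : ∀ (k : Fin r) (b : Matrix (Fin (n k)) (Fin (n k)) ℂ),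
      vᴴ * cornerEmb (ι k) b = cornerEmb (ι k) ((u k)ᴴ * b) := by
    intro k b
    rw [hvH, Matrix.add_mul, Matrix.sub_mul, Matrix.one_mul, Finset.sum_mul, Finset.sum_mul,
      Finset.sum_eq_single k (fun l _ hl =>
        cornerEmb_mul_disj (ι l) (ι k) (hdisj l k hl) ((u l)ᴴ) b)
        (by simp),
      Finset.sum_eq_single k (fun l _ hl =>
        cornerEmb_mul_disj (ι l) (ι k) (hdisj l k hl) 1 b)
        (by simp),
      cornerEmb_mul (ι k) (hinj k), cornerEmb_mul (ι k) (hinj k), Matrix.one_mul]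
    abel
  have key : ∀ (k : Fin r) (a E : Matrix (Fin (n k)) (Fin (n k)) ℂ),
      vᴴ * cornerEmb (ι k) a * v -
          vᴴ * (cornerEmb (ι k) E * v - v * cornerEmb (ι k) E) =
        cornerEmb (ι k) ((u k)ᴴ * a * u k - (u k)ᴴ * (E * u k - u k * E)) := by
    intro k a E
    rw [hLH k a, hR k ((u k)ᴴ * a), hR k E, hL k E,
      ← cornerEmb_sub (ι k) (E * u k) (u k * E), hLH k (E * u k - u k * E),
      ← cornerEmb_sub]
  exact ⟨key, fun η ω hcomp k E hE => by rw [hcomp k E hE]; exact key k (ω k E) E⟩
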